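/- For any set system D = (E, F), any word • in {*, ×}, and any A ⊆ E, the partial-(*•*) polynomial of D equals the partial-• polynomial of D^* (where the outer * is applied to the full ground set E). In particular w(D^{*•*|A}) = w((D^*)^{•|A}) for all A ⊆ E. -/
import Mathlib


open Finset Polynomial

variable {α : Type*} [DecidableEq α]

/-- The twist of a collection of feasible sets with respect to `A`. -/
noncomputable def SS.twist (A : Finset α) (F : Finset (Finset α)) : Finset (Finset α) :=
  F.image (fun X => symmDiff A X)

/-- Loop complementation at a single element `e`. -/
noncomputable def SS.lc (e : α) (F : Finset (Finset α)) : Finset (Finset α) :=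
  symmDiff F ((F.filter (fun X => e ∉ X)).image (insert e))

/-- The two generating operations: twist `*` and loop complementation `×`. -/
inductive SS.Op | star | cross

/-- Apply a single operation at a single element. -/
noncomputable def SS.opElem : SS.Op → α → Finset (Finset α) → Finset (Finset α)
  | .star, e, F => SS.twist {e} F
  | .cross, e, F => SS.lc e F

/-- Apply a word in `{*, ×}` at a single element. -/
noncomputable def SS.wordElem (w : List SS.Op) (e : α) (F : Finset (Finset α)) : Finset (Finset α) :=
  w.foldl (fun F o => SS.opElem o e F) F

/-- Apply a word in `{*, ×}` elementwise on a subset `A`. -/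
noncomputable def SS.wordOn (w : List SS.Op) (A : Finset α) (F : Finset (Finset α)) : Finset (Finset α) :=
  A.toList.foldl (fun F e => SS.wordElem w e F) F

/-- Size of a largest feasible set. -/
noncomputable def SS.rmax (F : Finset (Finset α)) : ℕ := F.sup Finset.card

/-- Size of a smallest feasible set. -/
noncomputable def SS.rmin (F : Finset (Finset α)) : ℕ := sInf (Finset.card '' (F : Set (Finset α)))

/-- The width of a set system. -/
noncomputable def SS.width (F : Finset (Finset α)) : ℕ := SS.rmax F - SS.rmin F

/-- The minimum-cardinality feasible sets. -/
noncomputable def SS.Fmin (F : Finset (Finset α)) : Finset (Finset α) :=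
  F.filter (fun X => X.card = SS.rmin F)

/-- The maximum-cardinality feasible sets. -/
noncomputable def SS.Fmax (F : Finset (Finset α)) : Finset (Finset α) :=
  F.filter (fun X => X.card = SS.rmax F)

/-- The partial-`w` polynomial of a set system with ground set `E`. -/
noncomputable def SS.poly (w : List SS.Op) (E : Finset α) (F : Finset (Finset α)) :
    Polynomial ℤ :=
  ∑ A ∈ E.powerset, (Polynomial.X : Polynomial ℤ) ^ SS.width (SS.wordOn w A F)

/-- A proper set system satisfying the symmetric exchange axiom. -/
noncomputable def SS.IsDeltaMatroid (F : Finset (Finset α)) : Prop :=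
  F.Nonempty ∧ ∀ X ∈ F, ∀ Y ∈ F, ∀ u ∈ symmDiff X Y,
    ∃ v ∈ symmDiff X Y, symmDiff X {u, v} ∈ F

/-- Apply a sequence of single-element twists and loop complementations. -/
noncomputable def SS.seqApply : List (SS.Op × α) → Finset (Finset α) → Finset (Finset α)
  | [], F => F
  | (o, e) :: s, F => SS.seqApply s (SS.opElem o e F)

/-- A set system is vf-safe if every sequence of single-element twists and loop
complementations yields a delta-matroid. -/
noncomputable def SS.VfSafe (F : Finset (Finset α)) : Prop :=
  ∀ s : List (SS.Op × α), SS.IsDeltaMatroid (SS.seqApply s F)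

/-- The direct sum of two set systems. -/
noncomputable def SS.dsum (F F' : Finset (Finset α)) : Finset (Finset α) :=
  (F ×ˢ F').image (fun p => p.1 ∪ p.2)

open SS

section Aux

variable {α : Type*} [DecidableEq α]

lemma twist_twist (A B : Finset α) (F : Finset (Finset α)) :
    SS.twist A (SS.twist B F) = SS.twist (symmDiff A B) F := by
  unfold SS.twist
  rw [Finset.image_image]
  congr 1; funext X; exact (symmDiff_assoc A B X).symm

lemma twist_empty (F : Finset (Finset α)) : SS.twist (∅ : Finset α) F = F := by
  unfold SS.twist
  have : (fun X : Finset α => symmDiff ∅ X) = id := by funext X; simp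
  rw [this, Finset.image_id]

lemma twist_comm (A B : Finset α) (F : Finset (Finset α)) :
    SS.twist A (SS.twist B F) = SS.twist B (SS.twist A F) := by
  rw [twist_twist, twist_twist, symmDiff_comm]

lemma lc_twist_comm {e : α} {S : Finset α} (he : e ∉ S) (F : Finset (Finset α)) :
    SS.lc e (SS.twist S F) = SS.twist S (SS.lc e F) := by
  unfold SS.lc SS.twist
  rw [Finset.image_symmDiff _ _ (symmDiff_right_injective S)]
  congr 1
  rw [Finset.filter_image, Finset.image_image, Finset.image_image]
  have hfilter : filter (fun a : Finset α => e ∉ symmDiff S a) F = filter (fun X => e ∉ X) F := by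
    apply Finset.filter_congr; intro X _
    simp [Finset.mem_symmDiff, he]
  rw [hfilter]
  apply Finset.image_congr
  intro X hX
  simp only [Finset.mem_coe, Finset.mem_filter] at hX
  obtain ⟨-, heX⟩ := hX
  ext a
  simp only [Function.comp_apply, Finset.mem_insert, Finset.mem_symmDiff]
  by_cases ha : a = e <;> simp [ha, he, heX]

lemma opElem_twist_comm {e : α} {S : Finset α} (he : e ∉ S) (o : SS.Op)
    (F : Finset (Finset α)) :
    SS.opElem o e (SS.twist S F) = SS.twist S (SS.opElem o e F) := by
  cases o with
  | star => exact twist_comm _ _ _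
  | cross => exact lc_twist_comm he F

lemma wordElem_twist_comm {e : α} {S : Finset α} (he : e ∉ S) (w : List SS.Op)
    (F : Finset (Finset α)) :
    SS.wordElem w e (SS.twist S F) = SS.twist S (SS.wordElem w e F) := by
  induction w generalizing F with
  | nil => rfl
  | cons o w ih =>
      show SS.wordElem w e (SS.opElem o e (SS.twist S F)) = _
      rw [opElem_twist_comm he, ih]
      rfl

lemma foldl_twist_comm {S : Finset α} (w : List SS.Op) (l : List α)
    (hl : ∀ e ∈ l, e ∉ S) (F : Finset (Finset α)) :
    l.foldl (fun F e => SS.wordElem w e F) (SS.twist S F)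
      = SS.twist S (l.foldl (fun F e => SS.wordElem w e F) F) := by
  induction l generalizing F with
  | nil => rfl
  | cons e l ih =>
      simp only [List.foldl_cons]
      rw [wordElem_twist_comm (hl e (by simp)), ih (fun x hx => hl x (by simp [hx]))]

lemma wordElem_sws (w : List SS.Op) (e : α) (F : Finset (Finset α)) :
    SS.wordElem ([SS.Op.star] ++ w ++ [SS.Op.star]) e F
      = SS.twist {e} (SS.wordElem w e (SS.twist {e} F)) := by
  unfold SS.wordElem
  rw [List.foldl_append, List.foldl_append]
  rfl

lemma key_list (w : List SS.Op) (l : List α) (hl : l.Nodup) (F : Finset (Finset α)) :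
    l.foldl (fun F e => SS.wordElem ([SS.Op.star] ++ w ++ [SS.Op.star]) e F) F
      = SS.twist l.toFinset
          (l.foldl (fun F e => SS.wordElem w e F) (SS.twist l.toFinset F)) := by
  induction l generalizing F with
  | nil => simp [twist_empty]
  | cons e l ih =>
      have hne : e ∉ l := (List.nodup_cons.mp hl).1
      have hnd : l.Nodup := (List.nodup_cons.mp hl).2
      have heS : e ∉ l.toFinset := by simpa using hne
      simp only [List.foldl_cons, List.toFinset_cons]
      rw [wordElem_sws, ih hnd]
      have hins : (insert e l.toFinset : Finset α) = symmDiff l.toFinset {e} := by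
        ext a
        simp only [Finset.mem_insert, Finset.mem_symmDiff, Finset.mem_singleton]
        by_cases ha : a = e <;> simp [ha, heS]
      rw [hins, ← twist_twist, ← twist_twist]
      congr 1
      rw [← foldl_twist_comm w l (fun x hx => by
        simp only [Finset.mem_singleton]
        exact fun h => hne (h ▸ hx)) ]
      congr 1
      rw [twist_comm]
      congr 1
      rw [wordElem_twist_comm heS]

lemma key_wordOn (w : List SS.Op) (A : Finset α) (F : Finset (Finset α)) :
    SS.wordOn ([SS.Op.star] ++ w ++ [SS.Op.star]) A F
      = SS.twist A (SS.wordOn w A (SS.twist A F)) := by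
  unfold SS.wordOn
  rw [key_list w A.toList A.nodup_toList]
  simp

lemma wordOn_twist_comm {S : Finset α} (w : List SS.Op) (A : Finset α)
    (hAS : ∀ e ∈ A, e ∉ S) (F : Finset (Finset α)) :
    SS.wordOn w A (SS.twist S F) = SS.twist S (SS.wordOn w A F) := by
  unfold SS.wordOn
  exact foldl_twist_comm w A.toList (fun e he => hAS e (by simpa using he)) F

/-- Feasible sets stay inside `E`. -/
lemma opElem_subset {E : Finset α} {e : α} (he : e ∈ E) (o : SS.Op)
    {F : Finset (Finset α)} (hF : ∀ X ∈ F, X ⊆ E) :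
    ∀ X ∈ SS.opElem o e F, X ⊆ E := by
  cases o with
  | star =>
      intro X hX
      simp only [SS.opElem, SS.twist, Finset.mem_image] at hX
      obtain ⟨Y, hY, rfl⟩ := hX
      intro a ha
      rcases Finset.mem_symmDiff.mp ha with ⟨h1, -⟩ | ⟨h1, -⟩
      · simpa using (Finset.mem_singleton.mp h1) ▸ he
      · exact hF Y hY h1
  | cross =>
      intro X hX
      simp only [SS.opElem, SS.lc] at hX
      rcases Finset.mem_symmDiff.mp hX with ⟨h1, -⟩ | ⟨h1, -⟩
      · exact hF X h1
      · simp only [Finset.mem_image, Finset.mem_filter] at h1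
        obtain ⟨Y, ⟨hY, -⟩, rfl⟩ := h1
        exact Finset.insert_subset he (hF Y hY)

lemma wordElem_subset {E : Finset α} {e : α} (he : e ∈ E) (w : List SS.Op)
    {F : Finset (Finset α)} (hF : ∀ X ∈ F, X ⊆ E) :
    ∀ X ∈ SS.wordElem w e F, X ⊆ E := by
  induction w generalizing F with
  | nil => exact hF
  | cons o w ih => exact ih (opElem_subset he o hF)

lemma twist_subset {E S : Finset α} (hS : S ⊆ E) {F : Finset (Finset α)}
    (hF : ∀ X ∈ F, X ⊆ E) : ∀ X ∈ SS.twist S F, X ⊆ E := by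
  intro X hX
  simp only [SS.twist, Finset.mem_image] at hX
  obtain ⟨Y, hY, rfl⟩ := hX
  intro a ha
  rcases Finset.mem_symmDiff.mp ha with ⟨h1, -⟩ | ⟨h1, -⟩
  · exact hS h1
  · exact hF Y hY h1

lemma wordOn_subset {E A : Finset α} (hA : A ⊆ E) (w : List SS.Op)
    {F : Finset (Finset α)} (hF : ∀ X ∈ F, X ⊆ E) :
    ∀ X ∈ SS.wordOn w A F, X ⊆ E := by
  unfold SS.wordOn
  have : ∀ e ∈ A.toList, e ∈ E := fun e he => hA (by simpa using he)
  revert hF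
  generalize A.toList = l at this
  induction l generalizing F with
  | nil => exact fun h => h
  | cons e l ih =>
      intro hF
      exact ih (fun x hx => this x (by simp [hx]))
        (wordElem_subset (this e (by simp)) w hF)

/-- The full twist preserves width. -/
lemma width_twist_full {E : Finset α} {F : Finset (Finset α)} (hF : ∀ X ∈ F, X ⊆ E) :
    SS.width (SS.twist E F) = SS.width F := by
  rcases F.eq_empty_or_nonempty with rfl | hne
  · simp [SS.twist]
  have hcard : ∀ X ∈ F, (symmDiff E X).card = E.card - X.card := by
    intro X hX
    have h1 : symmDiff E X = E \ X := by
      ext a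
      simp only [Finset.mem_symmDiff, Finset.mem_sdiff]
      constructor
      · rintro (⟨h1, h2⟩ | ⟨h1, h2⟩)
        · exact ⟨h1, h2⟩
        · exact absurd (hF X hX h1) h2
      · exact fun ⟨h1, h2⟩ => Or.inl ⟨h1, h2⟩
    rw [h1, Finset.card_sdiff_of_subset (hF X hX)]
  -- facts about rmin/rmax of F
  have hMle : ∀ X ∈ F, X.card ≤ SS.rmax F := fun X hX => Finset.le_sup hX
  obtain ⟨XM, hXM, hXMc⟩ := Finset.exists_mem_eq_sup F hne Finset.card
  have hmle : ∀ X ∈ F, SS.rmin F ≤ X.card := fun X hX =>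
    Nat.sInf_le ⟨X, by simpa using hX, rfl⟩
  have hmmem : SS.rmin F ∈ Finset.card '' (F : Set (Finset α)) :=
    Nat.sInf_mem (Set.Nonempty.image _ (by simpa using hne))
  obtain ⟨Xm, hXm, hXmc⟩ := hmmem
  simp only [Finset.mem_coe] at hXm
  have hME : SS.rmax F ≤ E.card := by
    rw [SS.rmax, hXMc]; exact Finset.card_le_card (hF XM hXM)
  have hmM : SS.rmin F ≤ SS.rmax F := le_trans (hmle XM hXM) (hMle XM hXM)
  -- twist facts
  have htne : (SS.twist E F).Nonempty := ⟨_, Finset.mem_image_of_mem _ hXm⟩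
  have htmem : ∀ Y ∈ SS.twist E F, ∃ X ∈ F, Y.card = E.card - X.card := by
    intro Y hY
    simp only [SS.twist, Finset.mem_image] at hY
    obtain ⟨X, hX, rfl⟩ := hY
    exact ⟨X, hX, hcard X hX⟩
  have hrmaxle : SS.rmax (SS.twist E F) ≤ E.card - SS.rmin F := by
    apply Finset.sup_le
    intro Y hY
    obtain ⟨X, hX, hYc⟩ := htmem Y hY
    rw [hYc]
    exact Nat.sub_le_sub_left (hmle X hX) _
  have hrmaxge : E.card - SS.rmin F ≤ SS.rmax (SS.twist E F) := by
    have : symmDiff E Xm ∈ SS.twist E F := Finset.mem_image_of_mem _ hXm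
    have := Finset.le_sup (f := Finset.card) this
    rwa [hcard Xm hXm, hXmc] at this
  have hrmax : SS.rmax (SS.twist E F) = E.card - SS.rmin F := le_antisymm hrmaxle hrmaxge
  have hrminle : SS.rmin (SS.twist E F) ≤ E.card - SS.rmax F := by
    have hmem : symmDiff E XM ∈ SS.twist E F := Finset.mem_image_of_mem _ hXM
    have hm : (symmDiff E XM).card ∈ Finset.card '' ((SS.twist E F : Set (Finset α))) :=
      ⟨symmDiff E XM, by simpa using hmem, rfl⟩
    have := Nat.sInf_le hm
    rw [hcard XM hXM] at this
    unfold SS.rmin SS.rmax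
    rw [hXMc]
    exact this
  have hrminge : E.card - SS.rmax F ≤ SS.rmin (SS.twist E F) := by
    have hmmem' : SS.rmin (SS.twist E F) ∈ Finset.card '' ((SS.twist E F : Set (Finset α))) :=
      Nat.sInf_mem (Set.Nonempty.image _ (by simpa using htne))
    obtain ⟨Y, hY, hYc⟩ := hmmem'
    simp only [Finset.mem_coe] at hY
    obtain ⟨X, hX, hYc'⟩ := htmem Y hY
    rw [← hYc, hYc']
    exact Nat.sub_le_sub_left (hMle X hX) _
  have hrmin : SS.rmin (SS.twist E F) = E.card - SS.rmax F := le_antisymm hrminle hrminge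
  unfold SS.width
  rw [hrmax, hrmin]
  omega

end Aux


theorem stmt8 (E : Finset α) (F : Finset (Finset α)) (hF : ∀ X ∈ F, X ⊆ E)
    (w : List SS.Op) :
    SS.poly ([SS.Op.star] ++ w ++ [SS.Op.star]) E F = SS.poly w E (SS.twist E F) ∧
    ∀ A ⊆ E, SS.width (SS.wordOn ([SS.Op.star] ++ w ++ [SS.Op.star]) A F) =
      SS.width (SS.wordOn w A (SS.twist E F)) := by
  have main : ∀ A ⊆ E, SS.width (SS.wordOn ([SS.Op.star] ++ w ++ [SS.Op.star]) A F) =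
      SS.width (SS.wordOn w A (SS.twist E F)) := by
    intro A hA
    have hEA : SS.twist E F = SS.twist (E \ A) (SS.twist A F) := by
      rw [twist_twist]
      congr 1
      ext a
      simp only [Finset.mem_symmDiff, Finset.mem_sdiff]
      by_cases ha : a ∈ A
      · simp [ha, hA ha]
      · simp [ha]
    rw [key_wordOn, hEA,
      wordOn_twist_comm w A (fun e he => by simp [he]) (SS.twist A F)]
    set G := SS.wordOn w A (SS.twist A F) with hG
    have hGsub : ∀ X ∈ G, X ⊆ E :=
      wordOn_subset hA w (twist_subset hA hF)
    have h1 : SS.twist (E \ A) G = SS.twist E (SS.twist A G) := by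
      rw [twist_twist]
      congr 1
      ext a
      simp only [Finset.mem_symmDiff, Finset.mem_sdiff]
      by_cases ha : a ∈ A
      · simp [ha, hA ha]
      · simp [ha]
    rw [h1, width_twist_full (twist_subset hA hGsub)]
  refine ⟨?_, main⟩
  unfold SS.poly
  apply Finset.sum_congr rfl
  intro A hA
  rw [main A (Finset.mem_powerset.mp hA)]
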